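/- Let q be a prime power and M a positive integer with p | M (where p is the characteristic) and gcd(q² − 1, M) = 1. Then every element of GL₂(F_q) that is not conjugate to a nontrivial Jordan block (λ 1; 0 λ) with λ ∈ F_q^× is an M-th power in GL₂(F_q), while no element conjugate to such a Jordan block is an M-th power. Consequently |{g^M : g ∈ GL₂(F_q)}| = (q²−1)(q²−q) − (q−1)(q²−1). -/

import Mathlib

open Matrix

/-- `A` is conjugate in `GL₂(F)` to a nontrivial Jordan block `(λ 1; 0 λ)` with `λ ∈ Fˣ`. -/
def IsJordanBlockConj {F : Type*} [Field F] (A : GL (Fin 2) F) : Prop :=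
  ∃ (lam : Fˣ) (P : GL (Fin 2) F),
    (P : Matrix (Fin 2) (Fin 2) F) * !![(lam : F), 1; 0, (lam : F)] *
      ((P⁻¹ : GL (Fin 2) F) : Matrix (Fin 2) (Fin 2) F) = (A : Matrix (Fin 2) (Fin 2) F)

open Polynomial
namespace PMGL2
variable {F : Type} [Field F]

lemma E_mul_E : (!![(0:F),1;0,0]) * !![0,1;0,0] = 0 := by
  ext i j; fin_cases i <;> fin_cases j <;> simp [Matrix.mul_apply, Fin.sum_univ_two]

lemma pow_scalar_add (lam : F) (n : Matrix (Fin 2) (Fin 2) F) (hn : n * n = 0) (m : ℕ) :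
    (lam • 1 + n) ^ m = lam ^ m • (1 : Matrix (Fin 2) (Fin 2) F) + ((m : F) * lam ^ (m - 1)) • n := by
  induction m with
  | zero => simp
  | succ m ih =>
      have key : lam ^ m + ((m:F) * lam ^ (m-1)) * lam = ((m:F)+1) * lam ^ m := by
        cases m with
        | zero => simp
        | succ k => push_cast; rw [mul_assoc, ← pow_succ]; ring
      rw [pow_succ, ih]
      calc (lam ^ m • (1 : Matrix (Fin 2) (Fin 2) F) + ((m:F) * lam ^ (m-1)) • n) * (lam • 1 + n)
          = (lam ^ m * lam) • 1 + (lam ^ m + ((m:F) * lam ^ (m-1)) * lam) • n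
              + ((m:F) * lam ^ (m-1)) • (n * n) := by
            simp only [add_mul, mul_add, smul_mul_assoc, mul_smul_comm, one_mul, mul_one, smul_smul]
            module
        _ = lam ^ (m+1) • 1 + (↑(m + 1) * lam ^ (m + 1 - 1)) • n := by
            rw [hn, smul_zero, add_zero, ← pow_succ, key, Nat.add_sub_cancel]
            push_cast; ring_nf



lemma sq_zero_entries (n : Matrix (Fin 2) (Fin 2) F) (h2 : n * n = 0) :
    n 1 1 = - n 0 0 ∧ n 0 0 * n 0 0 + n 0 1 * n 1 0 = 0 := by
  have e : ∀ i j, (n*n) i j = (0 : Matrix (Fin 2) (Fin 2) F) i j := fun i j => by rw [h2]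
  have e00 := e 0 0; have e01 := e 0 1; have e10 := e 1 0; have e11 := e 1 1
  simp only [Matrix.mul_apply, Fin.sum_univ_two, Matrix.zero_apply] at e00 e01 e10 e11
  by_cases h : n 0 0 + n 1 1 = 0
  · exact ⟨by linear_combination h, e00⟩
  · exfalso
    have hb : n 0 1 = 0 := by
      rcases mul_eq_zero.mp (show n 0 1 * (n 0 0 + n 1 1) = 0 by ring_nf; linear_combination e01) with h'|h'
      · exact h'
      · exact absurd h' h
    have hc : n 1 0 = 0 := by
      rcases mul_eq_zero.mp (show n 1 0 * (n 0 0 + n 1 1) = 0 by ring_nf; linear_combination e10) with h'|h'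
      · exact h'
      · exact absurd h' h
    rw [hb] at e00; rw [hc] at e11
    have ha : n 0 0 = 0 := by simpa using e00
    have hd : n 1 1 = 0 := by simpa using e11
    exact h (by rw [ha, hd, add_zero])

lemma exists_conj_E (n : Matrix (Fin 2) (Fin 2) F) (hn0 : n ≠ 0) (h2 : n * n = 0) :
    ∃ P : GL (Fin 2) F, (P : Matrix (Fin 2) (Fin 2) F) * !![0,1;0,0] *
      ((P⁻¹ : GL (Fin 2) F) : Matrix (Fin 2) (Fin 2) F) = n := by
  obtain ⟨hd, hdet⟩ := sq_zero_entries n h2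
  set a := n 0 0 with ha'
  set b := n 0 1 with hb'
  set c := n 1 0 with hc'
  by_cases hc : c ≠ 0
  · refine ⟨⟨!![a,1;c,0], !![0,c⁻¹;1,-(a*c⁻¹)], ?_, ?_⟩, ?_⟩
    · ext i j; fin_cases i <;> fin_cases j <;>
        simp [Matrix.mul_apply, Fin.sum_univ_two] <;> field_simp
    · ext i j; fin_cases i <;> fin_cases j <;>
        simp [Matrix.mul_apply, Fin.sum_univ_two] <;> field_simp <;> ring
    · show !![a,1;c,0] * !![0,1;0,0] * !![0,c⁻¹;1,-(a*c⁻¹)] = n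
      conv_rhs => rw [Matrix.eta_fin_two n, ← ha', ← hb', ← hc', hd]
      ext i j; fin_cases i <;> fin_cases j <;>
        simp [Matrix.mul_apply, Fin.sum_univ_two] <;>
        field_simp <;> linear_combination -hdet
  · push_neg at hc
    have ha : a = 0 := by
      rw [hc, mul_zero, add_zero] at hdet
      simpa using hdet
    have hb : b ≠ 0 := by
      intro hb
      apply hn0
      have := Matrix.eta_fin_two n
      rw [← ha', ← hb', ← hc', hd, ha, hb, hc] at this
      rw [this]; ext i j; fin_cases i <;> fin_cases j <;> simp
    refine ⟨⟨!![b,0;0,1], !![b⁻¹,0;0,1], ?_, ?_⟩, ?_⟩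
    · ext i j; fin_cases i <;> fin_cases j <;>
        simp [Matrix.mul_apply, Fin.sum_univ_two] <;> field_simp
    · ext i j; fin_cases i <;> fin_cases j <;>
        simp [Matrix.mul_apply, Fin.sum_univ_two] <;> field_simp
    · show !![b,0;0,1] * !![0,1;0,0] * !![b⁻¹,0;0,1] = n
      conv_rhs => rw [Matrix.eta_fin_two n, ← ha', ← hb', ← hc', hd, ha, hc]
      ext i j; fin_cases i <;> fin_cases j <;>
        simp [Matrix.mul_apply, Fin.sum_univ_two]



lemma charpoly_fin_two (M : Matrix (Fin 2) (Fin 2) F) :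
    M.charpoly = X^2 - C (M 0 0 + M 1 1) * X + C (M 0 0 * M 1 1 - M 0 1 * M 1 0) := by
  rw [Matrix.charpoly, Matrix.det_fin_two, charmatrix_apply, charmatrix_apply,
    charmatrix_apply, charmatrix_apply]
  simp [Matrix.diagonal]
  ring

lemma J_eq (lam : F) :
    !![lam,1;0,lam] = lam • (1 : Matrix (Fin 2) (Fin 2) F) + !![0,1;0,0] := by
  ext i j; fin_cases i <;> fin_cases j <;> simp [Matrix.one_apply]

lemma conj_decomp (P : GL (Fin 2) F) (lam : F) :
    (P : Matrix (Fin 2) (Fin 2) F) * !![lam,1;0,lam] * ((P⁻¹ : GL (Fin 2) F) : Matrix (Fin 2) (Fin 2) F)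
      = lam • (1 : Matrix (Fin 2) (Fin 2) F)
        + (P : Matrix (Fin 2) (Fin 2) F) * !![0,1;0,0] * ((P⁻¹ : GL (Fin 2) F) : Matrix (Fin 2) (Fin 2) F) := by
  rw [J_eq, mul_add, add_mul, mul_smul_comm, smul_mul_assoc, mul_one]
  congr 1
  rw [Units.mul_inv]

lemma jordan_structure {A : GL (Fin 2) F} (h : IsJordanBlockConj A) :
    ∃ (lam : Fˣ) (n : Matrix (Fin 2) (Fin 2) F), n ≠ 0 ∧ n * n = 0 ∧
      (A : Matrix (Fin 2) (Fin 2) F) = (lam : F) • 1 + n := by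
  obtain ⟨lam, P, hP⟩ := h
  set Pm : Matrix (Fin 2) (Fin 2) F := (P : Matrix (Fin 2) (Fin 2) F) with hPm
  set Qm : Matrix (Fin 2) (Fin 2) F := ((P⁻¹ : GL (Fin 2) F) : Matrix (Fin 2) (Fin 2) F) with hQm
  have hQP : Qm * Pm = 1 := Units.inv_mul P
  refine ⟨lam, Pm * !![0,1;0,0] * Qm, ?_, ?_, ?_⟩
  · intro hE
    have h2 : (!![(0:F),1;0,0]) = 0 := by
      calc !![(0:F),1;0,0] = (Qm * Pm) * !![0,1;0,0] * (Qm * Pm) := by rw [hQP]; simp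
        _ = Qm * (Pm * !![0,1;0,0] * Qm) * Pm := by simp only [mul_assoc]
        _ = 0 := by rw [hE]; simp
    have h3 : (!![(0:F),1;0,0]) 0 1 = ((0 : Matrix (Fin 2) (Fin 2) F)) 0 1 := by rw [h2]
    simp at h3
  · calc (Pm * !![0,1;0,0] * Qm) * (Pm * !![0,1;0,0] * Qm)
        = Pm * !![0,1;0,0] * ((Qm * Pm) * (!![0,1;0,0] * Qm)) := by simp only [mul_assoc]
      _ = Pm * (!![0,1;0,0] * !![0,1;0,0]) * Qm := by rw [hQP, one_mul]; simp only [mul_assoc]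
      _ = 0 := by rw [E_mul_E]; simp
  · rw [← hP, conj_decomp]

lemma jordan_of_decomp {A : GL (Fin 2) F} (lam : Fˣ) (n : Matrix (Fin 2) (Fin 2) F)
    (hn0 : n ≠ 0) (hn2 : n * n = 0)
    (hA : (A : Matrix (Fin 2) (Fin 2) F) = (lam : F) • 1 + n) : IsJordanBlockConj A := by
  obtain ⟨P, hP⟩ := exists_conj_E n hn0 hn2
  exact ⟨lam, P, by rw [conj_decomp, hP, hA]⟩

lemma pow_ne_one_of_decomp {A : GL (Fin 2) F} (lam : Fˣ) (n : Matrix (Fin 2) (Fin 2) F)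
    (hn0 : n ≠ 0) (hn2 : n * n = 0)
    (hA : (A : Matrix (Fin 2) (Fin 2) F) = (lam : F) • 1 + n)
    (K : ℕ) (hK : ((K : F)) ≠ 0) : (A : Matrix (Fin 2) (Fin 2) F) ^ K ≠ 1 := by
  rw [hA, pow_scalar_add _ _ hn2]
  intro h
  set c : F := (K : F) * (lam : F) ^ (K - 1) with hc
  set x : F := (lam : F) ^ K with hx
  have hc0 : c ≠ 0 := mul_ne_zero hK (pow_ne_zero _ (Units.ne_zero lam))
  have hcn : c • n = (1 - x) • (1 : Matrix (Fin 2) (Fin 2) F) := by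
    rw [sub_smul, one_smul]; exact eq_sub_of_add_eq' h
  have e1 : (c • n) * (c • n) = (c * c) • (n * n) := by
    rw [smul_mul_assoc, mul_smul_comm, smul_smul]
  have e2 : ((1 - x) • (1 : Matrix (Fin 2) (Fin 2) F)) * ((1 - x) • (1 : Matrix (Fin 2) (Fin 2) F))
      = ((1 - x) * (1 - x)) • (1 : Matrix (Fin 2) (Fin 2) F) := by
    rw [smul_mul_assoc, mul_smul_comm, smul_smul, mul_one]
  have hsq : ((1 - x) * (1 - x)) • (1 : Matrix (Fin 2) (Fin 2) F) = 0 := by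
    rw [← e2, ← hcn, e1, hn2, smul_zero]
  have h1 : (1 - x) = 0 := by
    rcases smul_eq_zero.mp hsq with h'|h'
    · exact mul_self_eq_zero.mp h'
    · exact absurd h' one_ne_zero
  rw [h1, zero_smul] at hcn
  exact hn0 ((smul_eq_zero.mp hcn).resolve_left hc0)

lemma gl_pow_eq_one {A : GL (Fin 2) F} {K : ℕ}
    (h : (A : Matrix (Fin 2) (Fin 2) F) ^ K = 1) : A ^ K = 1 :=
  Units.ext (by simpa using h)

lemma pow_eq_one_of_charpoly_dvd (A : GL (Fin 2) F) (K : ℕ)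
    (h : (A : Matrix (Fin 2) (Fin 2) F).charpoly ∣ X ^ K - 1) : A ^ K = 1 := by
  obtain ⟨c, hc⟩ := h
  have hCH := Matrix.aeval_self_charpoly (A : Matrix (Fin 2) (Fin 2) F)
  have h2 : aeval (A : Matrix (Fin 2) (Fin 2) F) (X ^ K - 1 : F[X]) = 0 := by
    rw [hc, _root_.map_mul, hCH, zero_mul]
  have h3 : (A : Matrix (Fin 2) (Fin 2) F) ^ K - 1 = 0 := by
    simpa [map_sub, map_pow, aeval_X, _root_.map_one] using h2
  exact gl_pow_eq_one (by rwa [sub_eq_zero] at h3)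

variable [Fintype F]

lemma pow_K_of_ne_zero (x : F) (hx : x ≠ 0) : x ^ (Fintype.card F ^ 2 - 1) = 1 := by
  have h : Fintype.card F ^ 2 - 1 = (Fintype.card F + 1) * (Fintype.card F - 1) := by
    have := Nat.sq_sub_sq (Fintype.card F) 1
    simpa using this
  rw [h, mul_comm, pow_mul, FiniteField.pow_card_sub_one_eq_one x hx, one_pow]

lemma charpoly_dvd_of_irreducible (a : Matrix (Fin 2) (Fin 2) F)
    (hirr : Irreducible a.charpoly) (hdeg : a.charpoly.natDegree = 2) :
    a.charpoly ∣ X ^ (Fintype.card F ^ 2 - 1) - 1 := by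
  haveI : Fact (Irreducible a.charpoly) := ⟨hirr⟩
  have hne : a.charpoly ≠ 0 := a.charpoly_monic.ne_zero
  let pb := AdjoinRoot.powerBasis hne
  haveI : Fintype (AdjoinRoot a.charpoly) := Module.fintypeOfFintype pb.basis
  have hcardR : Fintype.card (AdjoinRoot a.charpoly) = Fintype.card F ^ 2 := by
    rw [Module.card_fintype pb.basis, Fintype.card_fin, AdjoinRoot.powerBasis_dim, hdeg]
  have hx0 : AdjoinRoot.root a.charpoly ≠ 0 := by
    intro h
    have : a.charpoly ∣ X := by
      rw [← AdjoinRoot.mk_eq_zero, AdjoinRoot.mk_X, h]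
    have hle := Polynomial.natDegree_le_of_dvd this Polynomial.X_ne_zero
    rw [hdeg, Polynomial.natDegree_X] at hle
    omega
  have hxK : AdjoinRoot.root a.charpoly ^ (Fintype.card F ^ 2 - 1) = 1 := by
    have := FiniteField.pow_card_sub_one_eq_one (AdjoinRoot.root a.charpoly) hx0
    rwa [hcardR] at this
  rw [← AdjoinRoot.mk_eq_zero]
  rw [map_sub, map_pow, AdjoinRoot.mk_X, _root_.map_one, hxK, sub_self]


lemma pow_K_eq_one_or_jordan (A : GL (Fin 2) F) :
    A ^ (Fintype.card F ^ 2 - 1) = 1 ∨ IsJordanBlockConj A := by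
  classical
  set K := Fintype.card F ^ 2 - 1 with hK
  set a : Matrix (Fin 2) (Fin 2) F := (A : Matrix (Fin 2) (Fin 2) F) with ha
  have hmonic := a.charpoly_monic
  have hdeg : a.charpoly.natDegree = 2 := by
    rw [Matrix.charpoly_natDegree_eq_dim, Fintype.card_fin]
  have hdet : a 0 0 * a 1 1 - a 0 1 * a 1 0 ≠ 0 := by
    rw [← Matrix.det_fin_two]
    exact isUnit_iff_ne_zero.mp ((Matrix.isUnit_iff_isUnit_det a).mp A.isUnit)
  set t : F := a 0 0 + a 1 1 with ht
  set d : F := a 0 0 * a 1 1 - a 0 1 * a 1 0 with hd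
  have hχ : a.charpoly = X ^ 2 - C t * X + C d := charpoly_fin_two a
  by_cases hroot : ∃ x : F, a.charpoly.IsRoot x
  · obtain ⟨lam, hlam⟩ := hroot
    have hev : lam ^ 2 - t * lam + d = 0 := by
      have := hlam
      rw [Polynomial.IsRoot, hχ] at this
      simpa using this
    set mu : F := t - lam with hmu
    have hdlm : d = lam * mu := by rw [hmu]; linear_combination hev
    have hlam0 : lam ≠ 0 := by
      intro h; rw [hdlm, h, zero_mul] at hd; exact hdet hd.symm
    have hmu0 : mu ≠ 0 := by
      intro h; rw [hdlm, h, mul_zero] at hd; exact hdet hd.symm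
    have hfact : a.charpoly = (X - C lam) * (X - C mu) := by
      rw [hχ, hdlm, show t = lam + mu by rw [hmu]; ring]
      simp only [C_add, C_mul]
      ring
    by_cases heq : lam = mu
    · -- repeated root
      have hCH := Matrix.aeval_self_charpoly a
      rw [hfact, ← heq] at hCH
      have hn2 : (a - lam • 1) * (a - lam • 1) = 0 := by
        simpa [_root_.map_mul, map_sub, aeval_X, aeval_C, Algebra.algebraMap_eq_smul_one] using hCH
      by_cases hn : a - lam • 1 = 0
      · left
        apply gl_pow_eq_one
        have haeq : a = lam • 1 := by rwa [sub_eq_zero] at hn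
        rw [← ha, haeq, _root_.smul_pow, one_pow, pow_K_of_ne_zero lam hlam0, one_smul]
      · right
        refine jordan_of_decomp (Units.mk0 lam hlam0) (a - lam • 1) hn hn2 ?_
        rw [← ha, Units.val_mk0, add_comm, sub_add_cancel]
    · -- distinct roots
      left
      have dvd1 : (X - C lam) ∣ (X ^ K - 1 : F[X]) := by
        rw [dvd_iff_isRoot]
        simp [Polynomial.IsRoot, hK, pow_K_of_ne_zero lam hlam0]
      have dvd2 : (X - C mu) ∣ (X ^ K - 1 : F[X]) := by
        rw [dvd_iff_isRoot]
        simp [Polynomial.IsRoot, hK, pow_K_of_ne_zero mu hmu0]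
      have hsub : mu - lam ≠ 0 := sub_ne_zero.mpr (Ne.symm heq)
      have hcop : IsCoprime (X - C lam) (X - C mu : F[X]) := by
        refine ⟨C (mu - lam)⁻¹, -(C (mu - lam)⁻¹), ?_⟩
        have : C (mu - lam)⁻¹ * (X - C lam) + -(C (mu - lam)⁻¹) * (X - C mu)
            = C (mu - lam)⁻¹ * (C mu - C lam) := by ring
        rw [this, ← C_sub, ← C_mul, inv_mul_cancel₀ hsub, C_1]
      exact pow_eq_one_of_charpoly_dvd A K (hfact ▸ hcop.mul_dvd dvd1 dvd2)
  · -- irreducible case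
    left
    push_neg at hroot
    have hroots : a.charpoly.roots = 0 := by
      rw [Multiset.eq_zero_iff_forall_notMem]
      intro x hx
      exact hroot x ((Polynomial.mem_roots hmonic.ne_zero).mp hx)
    have hirr : Irreducible a.charpoly :=
      (hmonic.irreducible_iff_roots_eq_zero_of_degree_le_three
        (by rw [hdeg]) (by rw [hdeg]; norm_num)).mpr hroots
    exact pow_eq_one_of_charpoly_dvd A K (charpoly_dvd_of_irreducible a hirr hdeg)

lemma matrix_pow_of_gl_pow {A : GL (Fin 2) F} {K : ℕ} (h : A ^ K = 1) :
    (A : Matrix (Fin 2) (Fin 2) F) ^ K = 1 := by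
  rw [← Units.val_pow_eq_pow_val, h, Units.val_one]

variable (p : ℕ) [CharP F p]

lemma main_iff (M : ℕ) (hpM : p ∣ M)
    (hgcd : Nat.gcd (Fintype.card F ^ 2 - 1) M = 1) (A : GL (Fin 2) F) :
    ¬ IsJordanBlockConj A ↔ ∃ g : GL (Fin 2) F, g ^ M = A := by
  classical
  set q := Fintype.card F with hq
  set K := q ^ 2 - 1 with hK
  have hq2 : 2 ≤ q := Fintype.one_lt_card
  have hK1 : 1 < K := by
    have : 4 ≤ q ^ 2 := by nlinarith
    omega
  have hKne : ((K : ℕ) : F) ≠ 0 := by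
    have hcast : ((K : ℕ) : F) = ((q ^ 2 : ℕ) : F) - 1 := by
      rw [hK, Nat.cast_sub (by nlinarith)]
      norm_num
    rw [hcast]
    push_cast
    rw [show ((q : F)) = ((Fintype.card F : ℕ) : F) from by rw [hq],
      FiniteField.cast_card_eq_zero F]
    intro h
    have : (1 : F) = 0 := by linear_combination -h
    exact one_ne_zero this
  constructor
  · intro hnJ
    have hAK : A ^ K = 1 := (pow_K_eq_one_or_jordan A).resolve_right hnJ
    have hcop : Nat.Coprime M K := Nat.Coprime.symm hgcd
    obtain ⟨N, -, hN⟩ := Nat.exists_mul_mod_eq_one_of_coprime hcop hK1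
    refine ⟨A ^ N, ?_⟩
    rw [← pow_mul]
    have hmod : N * M ≡ 1 [MOD orderOf A] := by
      apply Nat.ModEq.of_dvd (orderOf_dvd_of_pow_eq_one hAK)
      show (N * M) % K = 1 % K
      rw [Nat.mod_eq_of_lt hK1, mul_comm, hN]
    calc A ^ (N * M) = A ^ 1 := pow_eq_pow_iff_modEq.mpr hmod
      _ = A := pow_one A
  · rintro ⟨g, rfl⟩ hJ
    obtain ⟨lam, n, hn0, hn2, hdecomp⟩ := jordan_structure hJ
    have hAKne : ((g ^ M : GL (Fin 2) F) : Matrix (Fin 2) (Fin 2) F) ^ K ≠ 1 :=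
      pow_ne_one_of_decomp lam n hn0 hn2 hdecomp K hKne
    rcases pow_K_eq_one_or_jordan g with hgK | hgJ
    · apply hAKne
      rw [← Units.val_pow_eq_pow_val, ← pow_mul, mul_comm, pow_mul, hgK, one_pow, Units.val_one]
    · obtain ⟨mu, m, hm0, hm2, hgdecomp⟩ := jordan_structure hgJ
      have hMF : ((M : ℕ) : F) = 0 := (CharP.cast_eq_zero_iff F p M).mpr hpM
      have hval : ((g ^ M : GL (Fin 2) F) : Matrix (Fin 2) (Fin 2) F)
          = ((mu : F) ^ M) • 1 := by
        rw [Units.val_pow_eq_pow_val, hgdecomp, pow_scalar_add _ _ hm2, hMF, zero_mul,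
          zero_smul, add_zero]
      apply hAKne
      rw [hval, _root_.smul_pow, one_pow, ← pow_mul, mul_comm, pow_mul,
        pow_K_of_ne_zero (mu : F) (Units.ne_zero mu), one_pow, one_smul]

def unitOf (lam : Fˣ) (n : Matrix (Fin 2) (Fin 2) F) (hn2 : n * n = 0) : GL (Fin 2) F where
  val := (lam : F) • 1 + n
  inv := (lam : F)⁻¹ • 1 - ((lam : F)⁻¹ * (lam : F)⁻¹) • n
  val_inv := by
    have e : ((lam : F) • (1 : Matrix (Fin 2) (Fin 2) F) + n) *
        ((lam : F)⁻¹ • 1 - ((lam : F)⁻¹ * (lam : F)⁻¹) • n)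
        = ((lam : F) * (lam : F)⁻¹) • 1
          + ((lam : F)⁻¹ - (lam : F) * ((lam : F)⁻¹ * (lam : F)⁻¹)) • n
          - ((lam : F)⁻¹ * (lam : F)⁻¹) • (n * n) := by
      simp only [mul_sub, add_mul, smul_mul_assoc, mul_smul_comm, smul_smul, one_mul, mul_one]
      module
    rw [e, hn2, smul_zero, sub_zero, mul_inv_cancel₀ (Units.ne_zero lam)]
    have h0 : (lam : F)⁻¹ - (lam : F) * ((lam : F)⁻¹ * (lam : F)⁻¹) = 0 := by
      field_simp; ring
    rw [h0, zero_smul, add_zero, one_smul]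
  inv_val := by
    have e : ((lam : F)⁻¹ • 1 - ((lam : F)⁻¹ * (lam : F)⁻¹) • n) *
        ((lam : F) • (1 : Matrix (Fin 2) (Fin 2) F) + n)
        = ((lam : F)⁻¹ * (lam : F)) • 1
          + ((lam : F)⁻¹ - (lam : F) * ((lam : F)⁻¹ * (lam : F)⁻¹)) • n
          - ((lam : F)⁻¹ * (lam : F)⁻¹) • (n * n) := by
      simp only [mul_sub, sub_mul, mul_add, smul_mul_assoc, mul_smul_comm, smul_smul,
        one_mul, mul_one]
      module
    rw [e, hn2, smul_zero, sub_zero, inv_mul_cancel₀ (Units.ne_zero lam)]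
    have h0 : (lam : F)⁻¹ - (lam : F) * ((lam : F)⁻¹ * (lam : F)⁻¹) = 0 := by
      field_simp; ring
    rw [h0, zero_smul, add_zero, one_smul]

lemma nil_card :
    Nat.card {n : Matrix (Fin 2) (Fin 2) F // n ≠ 0 ∧ n * n = 0}
      = Fintype.card F ^ 2 - 1 := by
  classical
  have hbij : Function.Bijective
      (fun x : (F × Fˣ) ⊕ Fˣ => (match x with
        | Sum.inl (a, c) => ⟨!![a, -(a*a) * (c : F)⁻¹; (c : F), -a], by
            constructor
            · intro h
              have := congrFun (congrFun h 1) 0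
              simp at this
            · ext i j
              fin_cases i <;> fin_cases j <;>
                simp [Matrix.mul_apply, Fin.sum_univ_two] <;> field_simp <;> ring⟩
        | Sum.inr b => ⟨!![0, (b : F); 0, 0], by
            constructor
            · intro h
              have := congrFun (congrFun h 0) 1
              simp at this
            · ext i j
              fin_cases i <;> fin_cases j <;>
                simp [Matrix.mul_apply, Fin.sum_univ_two]⟩
        : {n : Matrix (Fin 2) (Fin 2) F // n ≠ 0 ∧ n * n = 0})) := by
    constructor
    · rintro (⟨a, c⟩ | b) (⟨a', c'⟩ | b') h
      · simp only [Subtype.mk.injEq] at h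
        have h00 := congrFun (congrFun h 0) 0
        have h10 := congrFun (congrFun h 1) 0
        simp at h00 h10
        simp [h00, Units.ext h10]
      · simp only [Subtype.mk.injEq] at h
        have h10 := congrFun (congrFun h 1) 0
        simp at h10
      · simp only [Subtype.mk.injEq] at h
        have h10 := congrFun (congrFun h 1) 0
        simp at h10
        exact absurd h10.symm (Units.ne_zero c')
      · simp only [Subtype.mk.injEq] at h
        have h01 := congrFun (congrFun h 0) 1
        simp at h01
        simp [Units.ext h01]
    · rintro ⟨n, hn0, hn2⟩
      obtain ⟨hd, hdet⟩ := sq_zero_entries n hn2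
      by_cases hc : n 1 0 = 0
      · have ha : n 0 0 = 0 := by
          rw [hc, mul_zero, add_zero] at hdet
          simpa using hdet
        have hb : n 0 1 ≠ 0 := by
          intro hb
          apply hn0
          have heta := Matrix.eta_fin_two n
          rw [ha, hb, hc, hd, ha] at heta
          rw [heta]
          ext i j; fin_cases i <;> fin_cases j <;> simp
        refine ⟨Sum.inr (Units.mk0 (n 0 1) hb), ?_⟩
        apply Subtype.ext
        simp only [Units.val_mk0]
        conv_rhs => rw [Matrix.eta_fin_two n, ha, hc, hd, ha]
        ext i j; fin_cases i <;> fin_cases j <;> simp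
      · refine ⟨Sum.inl (n 0 0, Units.mk0 (n 1 0) hc), ?_⟩
        apply Subtype.ext
        simp only [Units.val_mk0]
        conv_rhs => rw [Matrix.eta_fin_two n, hd]
        ext i j; fin_cases i <;> fin_cases j <;>
          simp <;> field_simp <;> linear_combination -hdet
  have := Nat.card_eq_of_bijective _ hbij
  rw [← this, Nat.card_sum, Nat.card_prod, Nat.card_eq_fintype_card, Nat.card_eq_fintype_card,
    Fintype.card_units]
  have h1 : 1 ≤ Fintype.card F := Fintype.card_pos
  have h2 : 1 ≤ Fintype.card F ^ 2 := Nat.one_le_pow _ _ Fintype.card_pos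
  zify [h1, h2]
  ring

lemma jordan_card :
    Nat.card {A : GL (Fin 2) F // IsJordanBlockConj A}
      = (Fintype.card F - 1) * (Fintype.card F ^ 2 - 1) := by
  classical
  have hbij : Function.Bijective
      (fun x : Fˣ × {n : Matrix (Fin 2) (Fin 2) F // n ≠ 0 ∧ n * n = 0} =>
        (⟨unitOf x.1 x.2.1 x.2.2.2, jordan_of_decomp x.1 x.2.1 x.2.2.1 x.2.2.2 rfl⟩
          : {A : GL (Fin 2) F // IsJordanBlockConj A})) := by
    constructor
    · rintro ⟨lam, n, hn0, hn2⟩ ⟨lam', n', hn0', hn2'⟩ h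
      simp only [Subtype.mk.injEq] at h
      have hval : (lam : F) • (1 : Matrix (Fin 2) (Fin 2) F) + n
          = (lam' : F) • 1 + n' := congrArg Units.val h
      set c : F := (lam : F) - (lam' : F) with hc
      have hn' : n' = c • 1 + n := by
        rw [hc, sub_smul]
        linear_combination (norm := module) hval.symm
      have hsq : (c * c) • (1 : Matrix (Fin 2) (Fin 2) F) + (2 * c) • n = 0 := by
        have : n' * n' = (c * c) • 1 + (2 * c) • n + n * n := by
          rw [hn']
          simp only [mul_add, add_mul, smul_mul_assoc, mul_smul_comm, smul_smul, one_mul, mul_one]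
          module
        rw [hn2', hn2, add_zero] at this
        exact this.symm
      have hsqn : (c * c) • n = 0 := by
        have := congrArg (· * n) hsq
        simp only [add_mul, smul_mul_assoc, one_mul, zero_mul] at this
        rw [hn2, smul_zero, add_zero] at this
        exact this
      have hc0 : c = 0 := by
        rcases smul_eq_zero.mp hsqn with h' | h'
        · exact mul_self_eq_zero.mp h'
        · exact absurd h' hn0
      have hlam : lam = lam' := by
        apply Units.ext
        have h0 : (lam : F) - (lam' : F) = 0 := by rw [← hc]; exact hc0
        exact sub_eq_zero.mp h0
      have hnn : n' = n := by rw [hn', hc0, zero_smul, zero_add]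
      exact Prod.ext hlam (Subtype.ext hnn.symm)
    · rintro ⟨A, hA⟩
      obtain ⟨lam, n, hn0, hn2, hdecomp⟩ := jordan_structure hA
      refine ⟨(lam, ⟨n, hn0, hn2⟩), ?_⟩
      apply Subtype.ext
      apply Units.ext
      exact hdecomp.symm
  rw [← Nat.card_eq_of_bijective _ hbij, Nat.card_prod, Nat.card_eq_fintype_card,
    Fintype.card_units, nil_card]

lemma gl_card :
    Nat.card (GL (Fin 2) F)
      = (Fintype.card F ^ 2 - 1) * (Fintype.card F ^ 2 - Fintype.card F) := by
  rw [Matrix.card_GL_field 2, Fin.prod_univ_two]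
  simp

end PMGL2

theorem powerMap_image_GL2 (p r M : ℕ) (hp : p.Prime) (hr : 0 < r)
    (F : Type) [Field F] [Fintype F] [CharP F p] (q : ℕ) (hq : q = Fintype.card F)
    (hcard : q = p ^ r) (hM : 0 < M) (hpM : p ∣ M) (hgcd : Nat.gcd (q ^ 2 - 1) M = 1) :
    (∀ A : GL (Fin 2) F, (¬ IsJordanBlockConj A ↔ ∃ g : GL (Fin 2) F, g ^ M = A)) ∧
      Nat.card {A : GL (Fin 2) F | ∃ g : GL (Fin 2) F, g ^ M = A} =
        (q ^ 2 - 1) * (q ^ 2 - q) - (q - 1) * (q ^ 2 - 1) := by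
  classical
  subst hq
  refine ⟨fun A => PMGL2.main_iff p M hpM hgcd A, ?_⟩
  have hset : {A : GL (Fin 2) F | ∃ g : GL (Fin 2) F, g ^ M = A}
      = {A : GL (Fin 2) F | ¬ IsJordanBlockConj A} := by
    ext A
    exact (PMGL2.main_iff p M hpM hgcd A).symm
  rw [hset]
  have h1 : Nat.card {A : GL (Fin 2) F | ¬ IsJordanBlockConj A}
      = Nat.card (GL (Fin 2) F) - Nat.card {A : GL (Fin 2) F // IsJordanBlockConj A} := by
    rw [Nat.card_eq_fintype_card, Nat.card_eq_fintype_card, Nat.card_eq_fintype_card]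
    exact Fintype.card_subtype_compl _
  rw [h1, PMGL2.gl_card, PMGL2.jordan_card]
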